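/- Let i ∈ ℕ and v ∈ ℝ with i + v > 0, and let Z be a Gamma-distributed random variable with shape parameter i + v and rate c > 0. Then for every positive integer L, E[Z^L] = (1/c)^L · ∑_{j=0}^{L} δ_{j,L}(v) · i*_j, where δ_{j,L}(v) = C(L, j) · ∏_{q=j}^{L-1} (q + v) and i*_j is the falling factorial i(i−1)⋯(i−j+1) with i*_0 = 1. -/

import Mathlib

open MeasureTheory ProbabilityTheory Polynomial Finset

lemma descPoch_smeval_prod (k : ℕ) (x : ℝ) :
    (descPochhammer ℤ k).smeval x = ∏ q ∈ Finset.range k, (x - q) := by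
  induction k with
  | zero => simp [descPochhammer_zero]
  | succ k ih =>
      rw [descPochhammer_succ_right, smeval_mul, ih, Finset.prod_range_succ]
      congr 1
      simp [smeval_sub, smeval_X, smeval_natCast]

lemma descPoch_eval_prod (k : ℕ) (x : ℝ) :
    (descPochhammer ℝ k).eval x = ∏ q ∈ Finset.range k, (x - q) := by
  induction k with
  | zero => simp [descPochhammer_zero]
  | succ k ih => rw [descPochhammer_succ_eval, ih, Finset.prod_range_succ]

lemma reflect_prod (x : ℝ) (n : ℕ) :
    ∏ k ∈ Finset.range n, (x + (n : ℝ) - 1 - k) = ∏ k ∈ Finset.range n, (x + k) := by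
  rw [← Finset.prod_range_reflect (fun k => x + (k : ℝ)) n]
  refine Finset.prod_congr rfl fun j hj => ?_
  have hj' := Finset.mem_range.mp hj
  have : ((n - 1 - j : ℕ) : ℝ) = (n : ℝ) - 1 - j := by
    have : 1 ≤ n := by omega
    push_cast [Nat.cast_sub (by omega : j ≤ n - 1), Nat.cast_sub this]
    ring
  rw [this]; ring

lemma key_identity (L i : ℕ) (v : ℝ) :
    ∏ q ∈ Finset.range L, ((i : ℝ) + v + q) =
      ∑ j ∈ Finset.range (L + 1),
        ((Nat.choose L j : ℝ) * ∏ q ∈ Finset.Ico j L, ((q : ℝ) + v)) *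
          (Nat.descFactorial i j : ℝ) := by
  have h := Ring.descPochhammer_smeval_add (R := ℝ) (r := (i : ℝ)) (s := v + L - 1) L
    (Commute.all _ _)
  rw [Finset.Nat.sum_antidiagonal_eq_sum_range_succ_mk] at h
  have hL : (descPochhammer ℤ L).smeval ((i : ℝ) + (v + L - 1)) =
      ∏ q ∈ Finset.range L, ((i : ℝ) + v + q) := by
    rw [descPoch_smeval_prod, ← reflect_prod ((i : ℝ) + v) L]
    refine Finset.prod_congr rfl fun k _ => by ring
  rw [hL] at h
  rw [h]
  refine Finset.sum_congr rfl fun j hj => ?_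
  have hjL : j ≤ L := by
    have := Finset.mem_range.mp hj; omega
  have h1 : (descPochhammer ℤ j).smeval ((i : ℝ)) = (Nat.descFactorial i j : ℝ) := by
    rw [descPoch_smeval_prod, ← descPoch_eval_prod,
      descPochhammer_eval_eq_descFactorial]
  have h2 : (descPochhammer ℤ (L - j)).smeval (v + L - 1) =
      ∏ q ∈ Finset.Ico j L, ((q : ℝ) + v) := by
    rw [descPoch_smeval_prod, Finset.prod_Ico_eq_prod_range,
      Finset.prod_congr rfl (fun k _ => by push_cast; ring :
        ∀ k ∈ Finset.range (L - j), ((j + k : ℕ) : ℝ) + v = v + (j : ℝ) + k),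
      ← reflect_prod (v + (j : ℝ)) (L - j)]
    refine Finset.prod_congr rfl fun k _ => ?_
    have : ((L - j : ℕ) : ℝ) = (L : ℝ) - j := by push_cast [Nat.cast_sub hjL]; ring
    rw [this]
    ring
  rw [h1, h2]
  ring

lemma Gamma_add_nat_prod {a : ℝ} (ha : 0 < a) (L : ℕ) :
    Real.Gamma (a + L) = Real.Gamma a * ∏ q ∈ Finset.range L, (a + q) := by
  induction L with
  | zero => simp
  | succ L ih =>
      have h1 : a + (L + 1 : ℕ) = (a + L) + 1 := by push_cast; ring
      rw [h1, Real.Gamma_add_one (by positivity), ih, Finset.prod_range_succ]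
      ring

lemma gamma_moment {a r : ℝ} (ha : 0 < a) (hr : 0 < r) (L : ℕ) :
    ∫ x, x ^ L ∂(gammaMeasure a r) =
      (1 / r) ^ L * (Real.Gamma (a + L) / Real.Gamma a) := by
  have hmeas : Measurable fun x => (gammaPDFReal a r x).toNNReal :=
    (measurable_gammaPDFReal a r).real_toNNReal
  have hpdf : gammaPDF a r = fun x => (((gammaPDFReal a r x).toNNReal : NNReal) : ENNReal) := rfl
  rw [gammaMeasure, hpdf, integral_withDensity_eq_integral_smul hmeas]
  have hae : (fun x => (gammaPDFReal a r x).toNNReal • x ^ L) =ᵐ[volume]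
      Set.indicator (Set.Ioi (0 : ℝ))
        (fun x => r ^ a / Real.Gamma a * (x ^ (a + L - 1) * Real.exp (-(r * x)))) := by
    refine Filter.eventuallyEq_of_mem (s := ({0} : Set ℝ)ᶜ)
      (MeasureTheory.mem_ae_iff.mpr (by simp)) (fun x hx => ?_)
    · have hx0 : x ≠ 0 := hx
      rw [NNReal.smul_def, smul_eq_mul, Real.coe_toNNReal _ (gammaPDFReal_nonneg ha hr x)]
      rcases lt_or_gt_of_ne hx0 with hneg | hpos
      · rw [Set.indicator_of_notMem (by simp [Set.mem_Ioi, not_lt, hneg.le]), gammaPDFReal,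
          if_neg (not_le.mpr hneg), zero_mul]
      · rw [Set.indicator_of_mem (Set.mem_Ioi.mpr hpos), gammaPDFReal, if_pos hpos.le]
        have hx' : x ^ (a + (L : ℝ) - 1) = x ^ (a - 1) * x ^ L := by
          rw [← Real.rpow_natCast x L, ← Real.rpow_add hpos]
          congr 1
          ring
        rw [hx']
        ring
  rw [integral_congr_ae hae, integral_indicator measurableSet_Ioi, integral_const_mul,
    Real.integral_rpow_mul_exp_neg_mul_Ioi (by positivity) hr]
  have h1 : (1 / r) ^ (a + (L : ℝ)) = (r ^ a)⁻¹ * (1 / r) ^ L := by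
    rw [Real.rpow_add (by positivity), Real.rpow_natCast, one_div,
      Real.inv_rpow hr.le]
  rw [h1]
  have hG : Real.Gamma a ≠ 0 := (Real.Gamma_pos_of_pos ha).ne'
  have hra : r ^ a ≠ 0 := (Real.rpow_pos_of_pos hr a).ne'
  field_simp

/-- If `Z` is a Gamma random variable with shape `i + v > 0` and rate `c > 0`, then for every
positive integer `L`, `E[Z^L] = (1/c)^L ∑_{j=0}^L δ_{j,L}(v) i*_j`, where
`δ_{j,L}(v) = C(L,j) ∏_{q=j}^{L-1}(q+v)` and `i*_j` is the falling factorial. -/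
theorem stmt1 {Ω : Type*} [MeasureSpace Ω] [IsProbabilityMeasure (ℙ : Measure Ω)]
    (i : ℕ) (v c : ℝ) (hv : 0 < (i : ℝ) + v) (hc : 0 < c)
    (Z : Ω → ℝ) (hZ : Measurable Z)
    (hlaw : Measure.map Z ℙ = gammaMeasure ((i : ℝ) + v) c)
    (L : ℕ) (hL : 0 < L) :
    ∫ ω, (Z ω) ^ L ∂ℙ =
      (1 / c) ^ L * ∑ j ∈ Finset.range (L + 1),
        ((Nat.choose L j : ℝ) * ∏ q ∈ Finset.Ico j L, ((q : ℝ) + v)) *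
          (Nat.descFactorial i j : ℝ) := by
  have hmap : ∫ ω, (Z ω) ^ L ∂ℙ = ∫ x, x ^ L ∂(Measure.map Z ℙ) :=
    (integral_map hZ.aemeasurable
      ((measurable_id.pow_const L).aestronglyMeasurable)).symm
  rw [hmap, hlaw, gamma_moment hv hc L, Gamma_add_nat_prod hv L,
    mul_comm (Real.Gamma ((i : ℝ) + v)),
    mul_div_assoc, div_self (ne_of_gt (Real.Gamma_pos_of_pos hv)), mul_one,
    key_identity L i v]
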